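/- arXiv:2510.09614 — 5 statements merged into one kernel-verified Lean document; each statement's English description precedes it below -/
import Mathlib

section
/- Let H be a complex Hilbert space, let T be a bounded linear operator on H that is hyponormal, and let s ∈ ℂ. Then for every h ∈ H, ‖T*((conj s)·T* + T) h‖ · ‖h‖ ≥ (1 − |s|) · ‖T h‖². -/
open ContinuousLinearMap

/-- Key estimate: for a hyponormal operator `T` and `s ∈ ℂ`,
`‖T*((s̄T* + T)h)‖ · ‖h‖ ≥ (1 − |s|) · ‖Th‖²` for all `h`. -/
theorem norm_adjoint_conj_smul_adjoint_add_apply_mul_norm_ge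
    {H : Type*} [NormedAddCommGroup H] [InnerProductSpace ℂ H] [CompleteSpace H]
    (T : H →L[ℂ] H) (hT : ∀ h : H, ‖adjoint T h‖ ≤ ‖T h‖) (s : ℂ) :
    ∀ h : H,
      ‖adjoint T ((((starRingEnd ℂ) s) • adjoint T + T) h)‖ * ‖h‖ ≥
        (1 - ‖s‖) * ‖T h‖ ^ 2 := by
  intro h
  set u := ((((starRingEnd ℂ) s) • adjoint T + T) h) with hu
  have hinner : (inner ℂ (adjoint T u) h : ℂ) = s * inner ℂ (adjoint T h) (T h) + ‖T h‖ ^ 2 := by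
    rw [adjoint_inner_left]
    simp only [hu, add_apply, smul_apply, inner_add_left, inner_smul_left,
      RingHom.id_apply, starRingEnd_self_apply, inner_self_eq_norm_sq_to_K]
    norm_cast
  have h1 : (1 - ‖s‖) * ‖T h‖ ^ 2 ≤ (inner ℂ (adjoint T u) h : ℂ).re := by
    rw [hinner]
    have hre : (s * inner ℂ (adjoint T h) (T h) + (‖T h‖ : ℂ) ^ 2).re =
        (s * inner ℂ (adjoint T h) (T h)).re + ‖T h‖ ^ 2 := by
      simp [Complex.add_re]
      norm_cast
    rw [hre]
    have hb : -(‖s‖ * ‖T h‖ ^ 2) ≤ (s * inner ℂ (adjoint T h) (T h)).re := by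
      have := Complex.abs_re_le_norm (s * inner ℂ (adjoint T h) (T h))
      have habs : ‖s * inner ℂ (adjoint T h) (T h)‖ ≤
          ‖s‖ * ‖T h‖ ^ 2 := by
        rw [norm_mul]
        refine mul_le_mul_of_nonneg_left ?_ (norm_nonneg _)
        calc ‖(inner ℂ (adjoint T h) (T h) : ℂ)‖ = ‖(inner ℂ (adjoint T h) (T h) : ℂ)‖ := rfl
          _ ≤ ‖adjoint T h‖ * ‖T h‖ := norm_inner_le_norm _ _
          _ ≤ ‖T h‖ * ‖T h‖ := mul_le_mul_of_nonneg_right (hT h) (norm_nonneg _)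
          _ = ‖T h‖ ^ 2 := (sq ‖T h‖).symm
      nlinarith [abs_le.mp (abs_le.mpr ⟨neg_abs_le _, le_abs_self _⟩ :
        |(s * inner ℂ (adjoint T h) (T h)).re| ≤ |(s * inner ℂ (adjoint T h) (T h)).re|)]
    nlinarith
  have h2 : (inner ℂ (adjoint T u) h : ℂ).re ≤ ‖adjoint T u‖ * ‖h‖ := by
    calc (inner ℂ (adjoint T u) h : ℂ).re ≤ ‖(inner ℂ (adjoint T u) h : ℂ)‖ :=
          Complex.re_le_norm _
      _ = ‖(inner ℂ (adjoint T u) h : ℂ)‖ := rfl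
      _ ≤ ‖adjoint T u‖ * ‖h‖ := norm_inner_le_norm _ _
  linarith
end

section
/- Let H be a complex Hilbert space, let T be a bounded linear operator on H that is hyponormal, and let s ∈ ℂ with |s| > 1. Then T is bounded below if and only if the operator sT + T* is bounded below. -/
open ContinuousLinearMap

/-- Theorem (Javed–Maji): Let `T` be hyponormal on a complex Hilbert space and
`s ∈ ℂ` with `|s| > 1`. Then `T` is bounded below iff `s • T + T*` is bounded below. -/
theorem boundedBelow_iff_smul_add_adjoint_boundedBelow_of_one_lt_abs
    {H : Type*} [NormedAddCommGroup H] [InnerProductSpace ℂ H] [CompleteSpace H]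
    (T : H →L[ℂ] H) (hT : ∀ h : H, ‖adjoint T h‖ ≤ ‖T h‖)
    (s : ℂ) (hs : 1 < ‖s‖) :
    (∃ c > 0, ∀ h : H, c * ‖h‖ ≤ ‖T h‖) ↔
      (∃ c > 0, ∀ h : H, c * ‖h‖ ≤ ‖(s • T + adjoint T) h‖) := by
  have happ : ∀ h : H, (s • T + adjoint T) h = s • T h + adjoint T h := fun h => rfl
  have hnorm : ∀ h : H, ‖s • T h‖ = ‖s‖ * ‖T h‖ := fun h => by
    rw [norm_smul]
  have hlow : ∀ h : H, (‖s‖ - 1) * ‖T h‖ ≤ ‖(s • T + adjoint T) h‖ := by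
    intro h
    have h1 : ‖s • T h‖ ≤ ‖(s • T + adjoint T) h‖ + ‖adjoint T h‖ := by
      rw [happ]
      calc ‖s • T h‖ = ‖(s • T h + adjoint T h) - adjoint T h‖ := by
            rw [add_sub_cancel_right]
        _ ≤ ‖s • T h + adjoint T h‖ + ‖adjoint T h‖ := norm_sub_le _ _
    have h2 := hT h
    rw [hnorm] at h1
    nlinarith
  have hhigh : ∀ h : H, ‖(s • T + adjoint T) h‖ ≤ (‖s‖ + 1) * ‖T h‖ := by
    intro h
    rw [happ]
    calc ‖s • T h + adjoint T h‖ ≤ ‖s • T h‖ + ‖adjoint T h‖ := norm_add_le _ _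
      _ ≤ ‖s‖ * ‖T h‖ + ‖T h‖ := by rw [hnorm]; linarith [hT h]
      _ = (‖s‖ + 1) * ‖T h‖ := by ring
  constructor
  · rintro ⟨c, hc, hbd⟩
    refine ⟨(‖s‖ - 1) * c, mul_pos (by linarith) hc, fun h => ?_⟩
    calc (‖s‖ - 1) * c * ‖h‖ = (‖s‖ - 1) * (c * ‖h‖) := by ring
      _ ≤ (‖s‖ - 1) * ‖T h‖ := by
          apply mul_le_mul_of_nonneg_left (hbd h); linarith
      _ ≤ _ := hlow h
  · rintro ⟨c, hc, hbd⟩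
    refine ⟨c / (‖s‖ + 1), by positivity, fun h => ?_⟩
    rw [div_mul_eq_mul_div, div_le_iff₀ (by positivity)]
    calc c * ‖h‖ ≤ ‖(s • T + adjoint T) h‖ := hbd h
      _ ≤ (‖s‖ + 1) * ‖T h‖ := hhigh h
      _ = ‖T h‖ * (‖s‖ + 1) := by ring
end

section
/- Let H be a complex Hilbert space, let T be a bounded linear operator on H that is hyponormal, and let s ∈ ℂ with |s| ≠ 1. Then T is invertible (has a bounded linear inverse) if and only if sT + T* is invertible. -/
open ContinuousLinearMap

section Aux

variable {H : Type*} [NormedAddCommGroup H] [InnerProductSpace ℂ H] [CompleteSpace H]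

local notation "⟪" x ", " y "⟫" => @inner ℂ _ _ x y

/-- Key lemma: an invertible hyponormal operator has `s•T + T*` invertible for `|s| ≠ 1`. -/
lemma key_isUnit_aux (T : H →L[ℂ] H) (hT : ∀ h : H, ‖adjoint T h‖ ≤ ‖T h‖)
    (hU : IsUnit T) (s : ℂ) (hs : ‖s‖ ≠ 1) :
    IsUnit (s • T + adjoint T) := by
  obtain ⟨u, hu⟩ := id hU
  set V : H →L[ℂ] H := adjoint T * ↑u⁻¹ with hVdef
  have hV : ‖V‖ ≤ 1 := by
    refine opNorm_le_bound _ zero_le_one fun x => ?_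
    have h1 : V x = adjoint T ((↑u⁻¹ : H →L[ℂ] H) x) := rfl
    have h2 : T ((↑u⁻¹ : H →L[ℂ] H) x) = x := by
      have : (↑u * ↑u⁻¹ : H →L[ℂ] H) = 1 := u.mul_inv
      calc T ((↑u⁻¹ : H →L[ℂ] H) x) = (↑u * ↑u⁻¹ : H →L[ℂ] H) x := by rw [hu]; rfl
        _ = x := by rw [this]; rfl
    rw [h1, one_mul]
    calc ‖adjoint T ((↑u⁻¹ : H →L[ℂ] H) x)‖ ≤ ‖T ((↑u⁻¹ : H →L[ℂ] H) x)‖ := hT _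
      _ = ‖x‖ := by rw [h2]
  rcases hs.lt_or_gt with hlt | hgt
  · -- |s| < 1 : use W = (T*)⁻¹ T, ‖W‖ = ‖star W‖ = ‖V‖ ≤ 1
    obtain ⟨v, hv⟩ := hU.star
    have hvT : (↑v : H →L[ℂ] H) = adjoint T := by rw [hv, star_eq_adjoint]
    set W : H →L[ℂ] H := ↑v⁻¹ * ↑u with hWdef
    have hstarW : star W = V := by
      have hsv : star (↑v⁻¹ : H →L[ℂ] H) = ↑u⁻¹ := by
        have h1 : T * star (↑v⁻¹ : H →L[ℂ] H) = 1 := by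
          have := congrArg star v.inv_mul
          simpa [star_mul, hv, star_star] using this
        have h2 : star (↑v⁻¹ : H →L[ℂ] H) * T = 1 := by
          have := congrArg star v.mul_inv
          simpa [star_mul, hv, star_star] using this
        calc star (↑v⁻¹ : H →L[ℂ] H) = star ↑v⁻¹ * (T * ↑u⁻¹) := by
              rw [← hu, u.mul_inv, mul_one]
          _ = (star ↑v⁻¹ * T) * ↑u⁻¹ := by rw [mul_assoc]
          _ = ↑u⁻¹ := by rw [h2, one_mul]
      rw [hWdef, star_mul, hu, star_eq_adjoint, hsv, hVdef]
    have hW : ‖W‖ ≤ 1 := by rw [← norm_star, hstarW]; exact hV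
    have key : s • T + adjoint T = ↑v * (s • W + 1) := by
      rw [mul_add, mul_one, mul_smul_comm, hWdef, ← mul_assoc, v.mul_inv, one_mul, hu, hvT]
    rw [key]
    refine (v.isUnit).mul ?_
    have : ‖-(s • W)‖ < 1 := by
      rw [norm_neg, norm_smul]
      calc ‖s‖ * ‖W‖ ≤ ‖s‖ * 1 := by
            exact mul_le_mul_of_nonneg_left hW (norm_nonneg s)
        _ < 1 := by rwa [mul_one]
    have := (Units.oneSub (-(s • W)) this).isUnit
    simpa [sub_neg_eq_add, add_comm] using this
  · -- 1 < |s|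
    have hs0 : s ≠ 0 := by
      intro h; rw [h] at hgt; simp at hgt; linarith
    have key : s • T + adjoint T = s • (1 + s⁻¹ • V) * ↑u := by
      rw [smul_mul_assoc, add_mul, one_mul, smul_mul_assoc, hVdef, mul_assoc,
        u.inv_mul, mul_one, smul_add, smul_smul, mul_inv_cancel₀ hs0, one_smul, hu]
    rw [key]
    have h1 : IsUnit (1 + s⁻¹ • V) := by
      have : ‖-(s⁻¹ • V)‖ < 1 := by
        rw [norm_neg, norm_smul, norm_inv]
        calc ‖s‖⁻¹ * ‖V‖ ≤ ‖s‖⁻¹ * 1 := by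
              refine mul_le_mul_of_nonneg_left hV (by positivity)
          _ < 1 := by rw [mul_one, inv_lt_one_iff₀]; right; exact hgt
      have := (Units.oneSub (-(s⁻¹ • V)) this).isUnit
      simpa [sub_neg_eq_add] using this
    have h2 : IsUnit ((Units.mk0 s hs0) • (1 + s⁻¹ • V)) := (isUnit_smul_iff _ _).mpr h1
    rw [Units.smul_def, Units.val_mk0] at h2
    exact h2.mul u.isUnit

lemma norm_sq_identity_aux (T : H →L[ℂ] H) (s : ℂ) (h : H) :
    ‖(s • T + adjoint T) h‖ ^ 2 - ‖((starRingEnd ℂ s) • adjoint T + T) h‖ ^ 2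
      = (‖s‖ ^ 2 - 1) * (‖T h‖ ^ 2 - ‖adjoint T h‖ ^ 2) := by
  have e1 : (s • T + adjoint T) h = s • T h + adjoint T h := rfl
  have e2 : ((starRingEnd ℂ s) • adjoint T + T) h
      = (starRingEnd ℂ s) • adjoint T h + T h := rfl
  rw [e1, e2, @norm_add_sq ℂ, @norm_add_sq ℂ]
  have c1 : ⟪s • T h, adjoint T h⟫ = (starRingEnd ℂ s) * ⟪T h, adjoint T h⟫ :=
    inner_smul_left _ _ _
  have c2 : ⟪(starRingEnd ℂ s) • adjoint T h, T h⟫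
      = s * ⟪adjoint T h, T h⟫ := by
    rw [inner_smul_left, Complex.conj_conj]
  have c3 : Complex.re ((starRingEnd ℂ s) * ⟪T h, adjoint T h⟫)
      = Complex.re (s * ⟪adjoint T h, T h⟫) := by
    have hsym : ⟪T h, adjoint T h⟫ = (starRingEnd ℂ) ⟪adjoint T h, T h⟫ :=
      (inner_conj_symm _ _).symm
    rw [hsym, ← map_mul, Complex.conj_re]
  have hn : ‖s • T h‖ = ‖s‖ * ‖T h‖ := by
    rw [norm_smul]
  have hn2 : ‖(starRingEnd ℂ s) • adjoint T h‖ = ‖s‖ * ‖adjoint T h‖ := by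
    rw [norm_smul, Complex.norm_conj]
  rw [hn, hn2, c1, c2]
  simp only [RCLike.re_to_complex]
  rw [c3]
  ring

lemma adjoint_smul_add_adjoint_aux (T : H →L[ℂ] H) (s : ℂ) :
    adjoint (s • T + adjoint T) = (starRingEnd ℂ s) • adjoint T + T := by
  simp only [← star_eq_adjoint, star_add, star_smul, star_star, starRingEnd_apply]

end Aux

/-- Proposition (Javed–Maji): Let `T` be hyponormal on a complex Hilbert space
and `s ∈ ℂ` with `|s| ≠ 1`. Then `T` is invertible iff `s • T + T*` is invertible. -/
theorem isUnit_iff_isUnit_smul_add_adjoint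
    {H : Type*} [NormedAddCommGroup H] [InnerProductSpace ℂ H] [CompleteSpace H]
    (T : H →L[ℂ] H) (hT : ∀ h : H, ‖adjoint T h‖ ≤ ‖T h‖)
    (s : ℂ) (hs : ‖s‖ ≠ 1) :
    IsUnit T ↔ IsUnit (s • T + adjoint T) := by
  constructor
  · intro h
    exact key_isUnit_aux T hT h s hs
  · intro hA
    set A := s • T + adjoint T with hAdef
    have hadj : adjoint A = (starRingEnd ℂ s) • adjoint T + T :=
      adjoint_smul_add_adjoint_aux T s
    have hmulconj : s * starRingEnd ℂ s = (‖s‖ : ℂ) ^ 2 := by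
      rw [Complex.mul_conj, Complex.normSq_eq_norm_sq]
      push_cast
      ring
    rcases hs.lt_or_gt with hlt | hgt
    · -- |s| < 1 : adjoint A is hyponormal
      have hB : ∀ h : H, ‖adjoint (adjoint A) h‖ ≤ ‖adjoint A h‖ := by
        intro h
        rw [adjoint_adjoint, hadj]
        have hid := norm_sq_identity_aux T s h
        rw [← hAdef] at hid
        have h1 := hT h
        have h2 : ‖s‖ ^ 2 - 1 ≤ 0 := by nlinarith [norm_nonneg s]
        have h3 : 0 ≤ ‖T h‖ ^ 2 - ‖adjoint T h‖ ^ 2 := by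
          nlinarith [norm_nonneg (T h), norm_nonneg (adjoint T h)]
        have h4 : ‖A h‖ ^ 2 ≤ ‖((starRingEnd ℂ s) • adjoint T + T) h‖ ^ 2 := by
          nlinarith [mul_nonneg (neg_nonneg.mpr h2) h3]
        exact (pow_le_pow_iff_left₀ (norm_nonneg _) (norm_nonneg _) two_ne_zero).mp h4
      have hBU : IsUnit (adjoint A) := by
        rw [← star_eq_adjoint]; exact hA.star
      have habs : ‖-s‖ ≠ 1 := by rwa [norm_neg]
      have hkey := key_isUnit_aux (adjoint A) hB hBU (-s) habs
      have heq : (-s) • adjoint A + adjoint (adjoint A)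
          = ((1 : ℂ) - s * starRingEnd ℂ s) • adjoint T := by
        rw [adjoint_adjoint, hadj, hAdef]
        module
      rw [heq] at hkey
      have hc : (1 : ℂ) - s * starRingEnd ℂ s ≠ 0 := by
        rw [hmulconj]
        intro hzero
        have : (‖s‖ : ℂ) ^ 2 = 1 := by linear_combination -hzero
        have : (‖s‖) ^ 2 = 1 := by exact_mod_cast this
        nlinarith [norm_nonneg s]
      have hunit : IsUnit (adjoint T) := by
        have := (isUnit_smul_iff (Units.mk0 _ hc) (adjoint T)).mp ?_
        · exact this
        · rw [Units.smul_def, Units.val_mk0]; exact hkey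
      rw [← star_eq_adjoint] at hunit
      simpa [star_star] using hunit.star
    · -- 1 < |s| : A is hyponormal
      have hAhyp : ∀ h : H, ‖adjoint A h‖ ≤ ‖A h‖ := by
        intro h
        rw [hadj]
        have hid := norm_sq_identity_aux T s h
        rw [← hAdef] at hid
        have h1 := hT h
        have h2 : 0 ≤ ‖s‖ ^ 2 - 1 := by nlinarith [norm_nonneg s]
        have h3 : 0 ≤ ‖T h‖ ^ 2 - ‖adjoint T h‖ ^ 2 := by
          nlinarith [norm_nonneg (T h), norm_nonneg (adjoint T h)]
        have h4 : ‖((starRingEnd ℂ s) • adjoint T + T) h‖ ^ 2 ≤ ‖A h‖ ^ 2 := by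
          nlinarith [mul_nonneg h2 h3]
        exact (pow_le_pow_iff_left₀ (norm_nonneg _) (norm_nonneg _) two_ne_zero).mp h4
      have habs : ‖-(starRingEnd ℂ s)‖ ≠ 1 := by
        rwa [norm_neg, Complex.norm_conj]
      have hkey := key_isUnit_aux A hAhyp hA (-(starRingEnd ℂ s)) habs
      have heq : (-(starRingEnd ℂ s)) • A + adjoint A
          = ((1 : ℂ) - s * starRingEnd ℂ s) • T := by
        rw [hadj, hAdef]
        module
      rw [heq] at hkey
      have hc : (1 : ℂ) - s * starRingEnd ℂ s ≠ 0 := by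
        rw [hmulconj]
        intro hzero
        have : (‖s‖ : ℂ) ^ 2 = 1 := by linear_combination -hzero
        have : (‖s‖) ^ 2 = 1 := by exact_mod_cast this
        nlinarith [norm_nonneg s]
      have := (isUnit_smul_iff (Units.mk0 _ hc) T).mp ?_
      · exact this
      · rw [Units.smul_def, Units.val_mk0]; exact hkey
end

section
/- Let H be a complex Hilbert space, T a bounded linear operator on H that is hyponormal and invertible (with bounded inverse T⁻¹), and s ∈ ℂ with |s| < 1. Then for every f ∈ H, ‖(sT + T*) f‖ ≥ ((1 − |s|)/‖T⁻¹‖) · ‖f‖; in particular sT + T* is bounded below. -/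
open ContinuousLinearMap

local notation "⟪" x ", " y "⟫" => @inner ℂ _ _ x y

/-- Let `T` be hyponormal and invertible on a complex Hilbert space, with
bounded inverse `Tinv`, and let `s ∈ ℂ` with `|s| < 1`. Then
`‖(sT + T*)f‖ ≥ ((1 − |s|)/‖T⁻¹‖) · ‖f‖` for all `f`; in particular `sT + T*`
is bounded below. -/
theorem norm_smul_add_adjoint_apply_ge_of_invertible
    {H : Type*} [NormedAddCommGroup H] [InnerProductSpace ℂ H] [CompleteSpace H]
    (T Tinv : H →L[ℂ] H) (hT : ∀ h : H, ‖adjoint T h‖ ≤ ‖T h‖)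
    (h1 : T * Tinv = 1) (h2 : Tinv * T = 1)
    (s : ℂ) (hs : ‖s‖ < 1) :
    (∀ f : H, ((1 - ‖s‖) / ‖Tinv‖) * ‖f‖ ≤ ‖(s • T + adjoint T) f‖) ∧
      (∃ c > 0, ∀ h : H, c * ‖h‖ ≤ ‖(s • T + adjoint T) h‖) := by
  have hs1 : (0:ℝ) < 1 - ‖s‖ := by
    have := norm_nonneg s; linarith
  have key : ∀ f : H, (1 - ‖s‖) * ‖f‖ ≤ ‖Tinv‖ * ‖(s • T + adjoint T) f‖ := by
    intro f
    by_cases hf : f = 0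
    · simp [hf]
    set u := Tinv f with hu
    have hTu : T u = f := by
      have : (T * Tinv) f = (1 : H →L[ℂ] H) f := by rw [h1]
      simpa [ContinuousLinearMap.mul_apply] using this
    have e1 : ⟪u, (adjoint T) f⟫ = (‖f‖ : ℂ) ^ 2 := by
      rw [adjoint_inner_right, hTu, inner_self_eq_norm_sq_to_K]
      norm_cast
    have e2 : ‖⟪u, T f⟫‖ ≤ ‖f‖ ^ 2 := by
      have : ⟪u, T f⟫ = ⟪adjoint T u, T u⟫ := by
        rw [adjoint_inner_left, hTu]
      rw [this]
      calc ‖⟪adjoint T u, T u⟫‖ ≤ ‖adjoint T u‖ * ‖T u‖ := norm_inner_le_norm _ _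
        _ ≤ ‖T u‖ * ‖T u‖ := by
            have := hT u
            have := norm_nonneg (T u)
            nlinarith [hT u]
        _ = ‖f‖ ^ 2 := by rw [hTu]; ring
    have expand : ⟪u, (s • T + adjoint T) f⟫ = s * ⟪u, T f⟫ + (‖f‖ : ℂ) ^ 2 := by
      simp [inner_add_right, inner_smul_right, e1]
    have lower : (1 - ‖s‖) * ‖f‖ ^ 2 ≤ ‖⟪u, (s • T + adjoint T) f⟫‖ := by
      rw [expand]
      have h3 : ‖(‖f‖:ℂ)^2‖ ≤ ‖s * ⟪u, T f⟫ + (‖f‖:ℂ)^2‖ + ‖s * ⟪u, T f⟫‖ := by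
        calc ‖(‖f‖:ℂ)^2‖ = ‖(s * ⟪u, T f⟫ + (‖f‖:ℂ)^2) - s * ⟪u, T f⟫‖ := by ring_nf
          _ ≤ ‖s * ⟪u, T f⟫ + (‖f‖:ℂ)^2‖ + ‖s * ⟪u, T f⟫‖ := norm_sub_le _ _
      have h4 : ‖(‖f‖:ℂ)^2‖ = ‖f‖^2 := by
        rw [← Complex.ofReal_pow]
        simp [abs_of_nonneg (sq_nonneg ‖f‖)]
      have h5 : ‖s * ⟪u, T f⟫‖ ≤ ‖s‖ * ‖f‖^2 := by
        rw [norm_mul]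
        exact mul_le_mul_of_nonneg_left e2 (norm_nonneg s)
      nlinarith
    have upper : ‖⟪u, (s • T + adjoint T) f⟫‖ ≤ ‖Tinv‖ * ‖f‖ * ‖(s • T + adjoint T) f‖ := by
      calc ‖⟪u, (s • T + adjoint T) f⟫‖ ≤ ‖u‖ * ‖(s • T + adjoint T) f‖ :=
            norm_inner_le_norm _ _
        _ ≤ ‖Tinv‖ * ‖f‖ * ‖(s • T + adjoint T) f‖ := by
            have h6 : ‖u‖ ≤ ‖Tinv‖ * ‖f‖ := Tinv.le_opNorm f
            exact mul_le_mul_of_nonneg_right h6 (norm_nonneg _)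
    have hfpos : 0 < ‖f‖ := norm_pos_iff.mpr hf
    nlinarith [lower, upper]
  constructor
  · intro f
    by_cases hTi : ‖Tinv‖ = 0
    · have hT0 : Tinv = 0 := norm_eq_zero.mp hTi
      have hf : f = 0 := by
        have : (Tinv * T) f = (1 : H →L[ℂ] H) f := by rw [h2]
        simpa [ContinuousLinearMap.mul_apply, hT0] using this.symm
      simp [hf]
    · have hTpos : 0 < ‖Tinv‖ := lt_of_le_of_ne (norm_nonneg _) (Ne.symm hTi)
      rw [div_mul_eq_mul_div, div_le_iff₀ hTpos]
      have := key f
      nlinarith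
  · by_cases hTi : ‖Tinv‖ = 0
    · refine ⟨1, one_pos, fun h => ?_⟩
      have hT0 : Tinv = 0 := norm_eq_zero.mp hTi
      have hf : h = 0 := by
        have : (Tinv * T) h = (1 : H →L[ℂ] H) h := by rw [h2]
        simpa [ContinuousLinearMap.mul_apply, hT0] using this.symm
      simp [hf]
    · have hTpos : 0 < ‖Tinv‖ := lt_of_le_of_ne (norm_nonneg _) (Ne.symm hTi)
      refine ⟨(1 - ‖s‖) / ‖Tinv‖, div_pos hs1 hTpos, fun h => ?_⟩
      rw [div_mul_eq_mul_div, div_le_iff₀ hTpos]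
      have := key h
      nlinarith
end

section
/- Let H be a complex Hilbert space, T a bounded linear operator on H that is hyponormal, and s ∈ ℂ with 0 < |s| < 1. If both sT + T* and (conj s)·T* + T are bounded below, then both T and T* are bounded below. -/
open ContinuousLinearMap

section AuxHyponormal

variable {H : Type*} [NormedAddCommGroup H] [InnerProductSpace ℂ H] [CompleteSpace H]

set_option linter.unusedSectionVars false in
/-- A continuous linear map with a continuous linear left inverse is bounded below. -/
lemma aux_bddBelow_of_leftInv' (S T : H →L[ℂ] H) (hST : S * T = 1) :
    ∃ c > 0, ∀ h : H, c * ‖h‖ ≤ ‖T h‖ := by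
  refine ⟨(‖S‖ + 1)⁻¹, by positivity, fun h => ?_⟩
  have h1 : ‖h‖ = ‖S (T h)‖ := by
    have := DFunLike.congr_fun hST h
    change S (T h) = h at this
    rw [this]
  have h2 : ‖S (T h)‖ ≤ ‖S‖ * ‖T h‖ := S.le_opNorm _
  have h3 : (0:ℝ) ≤ ‖S‖ := norm_nonneg _
  have h4 : (0:ℝ) ≤ ‖T h‖ := norm_nonneg _
  rw [inv_mul_le_iff₀ (by positivity)]
  nlinarith [h1 ▸ h2]

/-- If `B` and `adjoint B` are both bounded below, then `B` is a unit. -/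
lemma aux_isUnit_of_bddBelow' (B : H →L[ℂ] H)
    (hB : ∃ c > 0, ∀ h : H, c * ‖h‖ ≤ ‖B h‖)
    (hB' : ∃ c > 0, ∀ h : H, c * ‖h‖ ≤ ‖adjoint B h‖) :
    IsUnit B := by
  obtain ⟨c, hc, hb⟩ := hB
  obtain ⟨c', hc', hb'⟩ := hB'
  have hker : B.ker = ⊥ := by
    rw [LinearMap.ker_eq_bot']
    intro h hh
    rw [ContinuousLinearMap.coe_coe] at hh
    have := hb h
    rw [hh, norm_zero] at this
    have : ‖h‖ ≤ 0 := by nlinarith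
    simpa using le_antisymm this (norm_nonneg _)
  have hanti : AntilipschitzWith (c.toNNReal)⁻¹ B := by
    apply B.antilipschitz_of_bound
    intro x
    rw [NNReal.coe_inv, Real.coe_toNNReal _ hc.le, ← div_eq_inv_mul, le_div_iff₀ hc]
    linarith [hb x]
  have hclosed : IsClosed (B.range : Set H) :=
    hanti.isClosed_range B.uniformContinuous
  haveI : CompleteSpace B.range := hclosed.completeSpace_coe
  have hrange : B.range = ⊤ := by
    rw [← Submodule.orthogonal_eq_bot_iff, Submodule.eq_bot_iff]
    intro g hg
    have hadj : adjoint B g = 0 := by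
      have h0 : ∀ h : H, inner ℂ (B h) g = (0 : ℂ) :=
        fun h => (Submodule.mem_orthogonal _ g).mp hg (B h) (LinearMap.mem_range_self _ h)
      have h1 : ∀ h : H, inner ℂ (adjoint B g) h = (0 : ℂ) := by
        intro h
        rw [adjoint_inner_left, ← inner_conj_symm]
        simp [h0 h]
      have := h1 (adjoint B g)
      rwa [inner_self_eq_zero] at this
    have := hb' g
    rw [hadj, norm_zero] at this
    have : ‖g‖ ≤ 0 := by nlinarith
    simpa using le_antisymm this (norm_nonneg _)
  let e := ContinuousLinearEquiv.ofBijective B hker hrange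
  have heB : (e : H →L[ℂ] H) = B := ContinuousLinearEquiv.coe_ofBijective B hker hrange
  refine ⟨⟨B, (e.symm : H →L[ℂ] H), ?_, ?_⟩, rfl⟩
  · ext x
    have : B (e.symm x) = e (e.symm x) := by rw [← heB]; rfl
    show B (e.symm x) = x
    rw [this]; exact e.apply_symm_apply x
  · ext x
    have : B x = e x := by rw [← heB]; rfl
    show e.symm (B x) = x
    rw [this]; exact e.symm_apply_apply x

/-- Key inequality: for hyponormal `T`, `‖(sT + T*)h‖ ≤ ‖(s̄T* + T)h‖`. -/
lemma aux_key_ineq' (T : H →L[ℂ] H) (hT : ∀ h : H, ‖adjoint T h‖ ≤ ‖T h‖)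
    (s : ℂ) (hs1 : ‖s‖ < 1) (h : H) :
    ‖(s • T + adjoint T) h‖ ≤ ‖((starRingEnd ℂ) s • adjoint T + T) h‖ := by
  have hX : ‖adjoint T h‖ ≤ ‖T h‖ := hT h
  have hnorms : ‖s‖ < 1 := hs1
  have e1 : ‖(s • T + adjoint T) h‖ ^ 2
      = ‖s • T h‖ ^ 2 + 2 * Complex.re (inner ℂ (s • T h) (adjoint T h)) + ‖adjoint T h‖ ^ 2 := by
    rw [add_apply, smul_apply]
    exact norm_add_sq (𝕜 := ℂ) _ _
  have e2 : ‖((starRingEnd ℂ) s • adjoint T + T) h‖ ^ 2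
      = ‖(starRingEnd ℂ) s • adjoint T h‖ ^ 2
        + 2 * Complex.re (inner ℂ ((starRingEnd ℂ) s • adjoint T h) (T h)) + ‖T h‖ ^ 2 := by
    rw [add_apply, smul_apply]
    exact norm_add_sq (𝕜 := ℂ) _ _
  have ecross : Complex.re (inner ℂ ((starRingEnd ℂ) s • adjoint T h) (T h))
      = Complex.re (inner ℂ (s • T h) ((adjoint T) h) : ℂ) := by
    rw [inner_smul_left, inner_smul_left]
    have hz : (inner ℂ ((adjoint T) h) (T h) : ℂ)
        = (starRingEnd ℂ) (inner ℂ (T h) ((adjoint T) h)) := (inner_conj_symm _ _).symm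
    simp only [Complex.mul_re]
    rw [hz]
    simp only [Complex.conj_re, Complex.conj_im]
    ring
  have hs : ‖s • T h‖ = ‖s‖ * ‖T h‖ := norm_smul _ _
  have hs' : ‖(starRingEnd ℂ) s • adjoint T h‖ = ‖s‖ * ‖adjoint T h‖ := by
    rw [norm_smul, RCLike.norm_conj]
  have hsq : ‖(s • T + adjoint T) h‖ ^ 2 ≤ ‖((starRingEnd ℂ) s • adjoint T + T) h‖ ^ 2 := by
    rw [e1, e2, ecross, hs, hs']
    have hss : ‖s‖ ^ 2 ≤ 1 := by nlinarith [norm_nonneg s]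
    have hXY : ‖adjoint T h‖ ^ 2 ≤ ‖T h‖ ^ 2 := by
      nlinarith [norm_nonneg (adjoint T h), norm_nonneg (T h)]
    nlinarith [mul_nonneg (sub_nonneg.2 hss) (sub_nonneg.2 hXY)]
  nlinarith [norm_nonneg ((s • T + adjoint T) h),
    norm_nonneg (((starRingEnd ℂ) s • adjoint T + T) h)]

end AuxHyponormal

/-- Let `T` be hyponormal on a complex Hilbert space and `s ∈ ℂ` with
`0 < |s| < 1`. If both `sT + T*` and `s̄T* + T` are bounded below, then both
`T` and `T*` are bounded below. -/
theorem boundedBelow_of_boundedBelow_pair_of_abs_lt_one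
    {H : Type*} [NormedAddCommGroup H] [InnerProductSpace ℂ H] [CompleteSpace H]
    (T : H →L[ℂ] H) (hT : ∀ h : H, ‖adjoint T h‖ ≤ ‖T h‖)
    (s : ℂ) (hs0 : 0 < ‖s‖) (hs1 : ‖s‖ < 1)
    (h1 : ∃ c > 0, ∀ h : H, c * ‖h‖ ≤ ‖(s • T + adjoint T) h‖)
    (h2 : ∃ c > 0, ∀ h : H,
      c * ‖h‖ ≤ ‖(((starRingEnd ℂ) s) • adjoint T + T) h‖) :
    (∃ c > 0, ∀ h : H, c * ‖h‖ ≤ ‖T h‖) ∧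
      (∃ c > 0, ∀ h : H, c * ‖h‖ ≤ ‖adjoint T h‖) := by
  set A : H →L[ℂ] H := s • T + adjoint T with hA
  have hAadj : adjoint A = (starRingEnd ℂ) s • adjoint T + T := by
    rw [hA, map_add, adjoint_adjoint, map_smulₛₗ]
  have hkey : ∀ h : H, ‖A h‖ ≤ ‖adjoint A h‖ := by
    intro h
    rw [hAadj]
    exact aux_key_ineq' T hT s hs1 h
  have hUA' : IsUnit (adjoint A) :=
    aux_isUnit_of_bddBelow' (adjoint A) (by rw [hAadj]; exact h2)
      (by rw [adjoint_adjoint]; exact h1)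
  obtain ⟨uA', huA'⟩ := hUA'
  set Q : H →L[ℂ] H := A * (↑uA'⁻¹ : H →L[ℂ] H) with hQ
  have hQle : ∀ g : H, ‖Q g‖ ≤ ‖g‖ := by
    intro g
    have hinv : adjoint A ((↑uA'⁻¹ : H →L[ℂ] H) g) = g := by
      have hmi : ((↑uA' : H →L[ℂ] H) * ↑uA'⁻¹) = 1 := by
        rw [← Units.val_mul, mul_inv_cancel, Units.val_one]
      rw [← huA']
      calc (↑uA' : H →L[ℂ] H) ((↑uA'⁻¹ : H →L[ℂ] H) g)
          = (((↑uA' : H →L[ℂ] H) * ↑uA'⁻¹)) g := rfl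
        _ = (1 : H →L[ℂ] H) g := by rw [hmi]
        _ = g := rfl
    calc ‖Q g‖ = ‖A ((↑uA'⁻¹ : H →L[ℂ] H) g)‖ := by rw [hQ]; rfl
      _ ≤ ‖adjoint A ((↑uA'⁻¹ : H →L[ℂ] H) g)‖ := hkey _
      _ = ‖g‖ := by rw [hinv]
  have hQnorm : ‖(starRingEnd ℂ) s • Q‖ < 1 := by
    have hQ1 : ‖Q‖ ≤ 1 := opNorm_le_bound _ zero_le_one (fun g => by
      simpa using hQle g)
    rw [norm_smul, RCLike.norm_conj]
    nlinarith [norm_nonneg Q]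
  set u1 : (H →L[ℂ] H)ˣ := Units.oneSub ((starRingEnd ℂ) s • Q) hQnorm with hu1
  have hQA : Q * (↑uA' : H →L[ℂ] H) = A := by
    rw [hQ, mul_assoc, ← Units.val_mul, inv_mul_cancel, Units.val_one, mul_one]
  have hid : ((↑u1 : H →L[ℂ] H) * ↑uA') = (1 - (starRingEnd ℂ) s * s) • T := by
    have h₁ : (↑u1 : H →L[ℂ] H) = 1 - (starRingEnd ℂ) s • Q := rfl
    rw [h₁, sub_mul, one_mul, smul_mul_assoc, hQA, huA', hAadj, hA]
    simp only [smul_add, smul_smul, sub_smul, one_smul]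
    abel
  have hne : (1 : ℂ) - (starRingEnd ℂ) s * s ≠ 0 := by
    intro hcon
    have h₂ : (starRingEnd ℂ) s * s = 1 := by
      have := sub_eq_zero.mp hcon; exact this.symm
    have := congrArg (‖·‖) h₂
    rw [norm_mul, Complex.norm_conj, norm_one] at this
    nlinarith
  have hUT : IsUnit T := by
    have hTs : T = ((1 - (starRingEnd ℂ) s * s)⁻¹) • ((↑u1 : H →L[ℂ] H) * ↑uA') := by
      rw [hid, smul_smul, inv_mul_cancel₀ hne, one_smul]
    rw [hTs]
    have hUs : IsUnit (((1 - (starRingEnd ℂ) s * s)⁻¹ : ℂ) • (1 : H →L[ℂ] H)) := by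
      refine ⟨⟨_, (1 - (starRingEnd ℂ) s * s) • (1 : H →L[ℂ] H), ?_, ?_⟩, rfl⟩
      · rw [smul_mul_smul_comm, inv_mul_cancel₀ hne, one_smul, one_mul]
      · rw [smul_mul_smul_comm, mul_inv_cancel₀ hne, one_smul, one_mul]
    have : ((1 - (starRingEnd ℂ) s * s)⁻¹ : ℂ) • ((↑u1 : H →L[ℂ] H) * ↑uA')
        = (((1 - (starRingEnd ℂ) s * s)⁻¹ : ℂ) • (1 : H →L[ℂ] H)) * ((↑u1 : H →L[ℂ] H) * ↑uA') := by
      rw [smul_mul_assoc, one_mul]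
    rw [this]
    exact hUs.mul ((u1 * uA').isUnit)
  obtain ⟨uT, huT⟩ := hUT
  constructor
  · refine aux_bddBelow_of_leftInv' (↑uT⁻¹ : H →L[ℂ] H) T ?_
    rw [← huT, ← Units.val_mul, inv_mul_cancel, Units.val_one]
  · refine aux_bddBelow_of_leftInv' (adjoint (↑uT⁻¹ : H →L[ℂ] H)) (adjoint T) ?_
    have hmi : T * (↑uT⁻¹ : H →L[ℂ] H) = 1 := by
      rw [← huT, ← Units.val_mul, mul_inv_cancel, Units.val_one]
    have : adjoint (T ∘L (↑uT⁻¹ : H →L[ℂ] H))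
        = adjoint (↑uT⁻¹ : H →L[ℂ] H) ∘L adjoint T := adjoint_comp _ _
    calc adjoint (↑uT⁻¹ : H →L[ℂ] H) * adjoint T
        = adjoint (T * (↑uT⁻¹ : H →L[ℂ] H)) := this.symm
      _ = adjoint (1 : H →L[ℂ] H) := by rw [hmi]
      _ = 1 := by rw [← star_eq_adjoint]; exact star_one _
end
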